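/- Let k be a field. There is no g ∈ GL_3(k) such that g·span_k{E_12, E_13}·g^{−1} = span_k{E_23, E_13}; that is, the two 2-dimensional elementary subalgebras span{E_12, E_13} and span{E_23, E_13} of gl_3 are not GL_3-conjugate. -/

import Mathlib

open Matrix

lemma conj_entry {k : Type*} [Field k] (G H : Matrix (Fin 3) (Fin 3) k) (a b : k)
    (i j : Fin 3) :
    (G * (a • Matrix.single (0 : Fin 3) (1 : Fin 3) (1 : k) +
        b • Matrix.single (0 : Fin 3) (2 : Fin 3) (1 : k)) * H) i j =
      G i 0 * (a * H 1 j + b * H 2 j) := by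
  simp only [Matrix.mul_apply, Matrix.add_apply, Matrix.smul_apply, Matrix.single,
    Matrix.of_apply, Fin.sum_univ_three, smul_eq_mul]
  norm_num [Fin.ext_iff]
  ring

/-- Over any field `k`, there is no `g ∈ GL_3(k)` conjugating
`span{E₁₂, E₁₃}` to `span{E₂₃, E₁₃}`: these two 2-dimensional elementary subalgebras of
`gl₃` are not `GL₃`-conjugate. -/
theorem span_E12_E13_not_conjugate_span_E23_E13 {k : Type*} [Field k] :
    ¬ ∃ g : GL (Fin 3) k,
      (fun M => (g : Matrix (Fin 3) (Fin 3) k) * M *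
          ((g⁻¹ : GL (Fin 3) k) : Matrix (Fin 3) (Fin 3) k)) ''
        ((Submodule.span k
          {Matrix.single (0 : Fin 3) (1 : Fin 3) (1 : k),
            Matrix.single (0 : Fin 3) (2 : Fin 3) (1 : k)} :
          Submodule k (Matrix (Fin 3) (Fin 3) k)) : Set (Matrix (Fin 3) (Fin 3) k)) =
      ((Submodule.span k
        {Matrix.single (1 : Fin 3) (2 : Fin 3) (1 : k),
          Matrix.single (0 : Fin 3) (2 : Fin 3) (1 : k)} :
        Submodule k (Matrix (Fin 3) (Fin 3) k)) : Set (Matrix (Fin 3) (Fin 3) k)) := by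
  rintro ⟨g, hg⟩
  set G : Matrix (Fin 3) (Fin 3) k := (g : Matrix (Fin 3) (Fin 3) k)
  set H : Matrix (Fin 3) (Fin 3) k := ((g⁻¹ : GL (Fin 3) k) : Matrix (Fin 3) (Fin 3) k)
  -- E23 is in the RHS span, hence in the image
  have h23 : Matrix.single (1 : Fin 3) (2 : Fin 3) (1 : k) ∈
      (fun M => G * M * H) ''
        ((Submodule.span k
          {Matrix.single (0 : Fin 3) (1 : Fin 3) (1 : k),
            Matrix.single (0 : Fin 3) (2 : Fin 3) (1 : k)} :
          Submodule k (Matrix (Fin 3) (Fin 3) k)) : Set (Matrix (Fin 3) (Fin 3) k)) := by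
    rw [hg]
    exact Submodule.subset_span (Set.mem_insert _ _)
  have h13 : Matrix.single (0 : Fin 3) (2 : Fin 3) (1 : k) ∈
      (fun M => G * M * H) ''
        ((Submodule.span k
          {Matrix.single (0 : Fin 3) (1 : Fin 3) (1 : k),
            Matrix.single (0 : Fin 3) (2 : Fin 3) (1 : k)} :
          Submodule k (Matrix (Fin 3) (Fin 3) k)) : Set (Matrix (Fin 3) (Fin 3) k)) := by
    rw [hg]
    exact Submodule.subset_span (Set.mem_insert_of_mem _ rfl)
  obtain ⟨M, hM, hMeq⟩ := h23
  obtain ⟨N, hN, hNeq⟩ := h13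
  rw [SetLike.mem_coe, Submodule.mem_span_pair] at hM hN
  obtain ⟨a, b, hab⟩ := hM
  obtain ⟨c, d, hcd⟩ := hN
  rw [← hab] at hMeq
  rw [← hcd] at hNeq
  -- entry equations
  have e1 : G 0 0 * (a * H 1 2 + b * H 2 2) = 0 := by
    have := congrFun (congrFun hMeq 0) 2
    simp only [conj_entry] at this
    simpa using this
  have e2 : G 1 0 * (a * H 1 2 + b * H 2 2) = 1 := by
    have := congrFun (congrFun hMeq 1) 2
    simp only [conj_entry] at this
    simpa using this
  have e3 : G 0 0 * (c * H 1 2 + d * H 2 2) = 1 := by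
    have := congrFun (congrFun hNeq 0) 2
    simp only [conj_entry] at this
    simpa using this
  have hG00 : G 0 0 ≠ 0 := fun h => by simp [h] at e3
  have hP : a * H 1 2 + b * H 2 2 = 0 := by
    rcases mul_eq_zero.mp e1 with h | h
    · exact absurd h hG00
    · exact h
  rw [hP, mul_zero] at e2
  exact zero_ne_one e2
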